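/- Let β, ε ∈ ℝ, set δ = βε/2, and let M be the 4×4 lower triangular matrix with rows (1,0,0,0), (0,1,0,0), (0,β,1,0), (0,δ,ε,1). Let E be the 4-dimensional PW-space on ([0,2];(1)) whose elements are pairs (P,Q) of real polynomials of degree at most 3 satisfying (Q(1),Q′(1),Q″(1),Q‴(1)) = M·(P(1),P′(1),P″(1),P‴(1)). Then E is an ECP-space good for design on ([0,2];(1)) if and only if β > −4 and ε > −4. -/

import Mathlib

open Set

/-- The `j`-th derivative of a polynomial. -/
noncomputable def pder : ℕ → Polynomial ℝ → Polynomial ℝ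
  | 0, R => R
  | (j + 1), R => Polynomial.derivative (pder j R)

/-- Evaluation of the `j`-th derivative at `x`. -/
noncomputable def pev (R : Polynomial ℝ) (j : ℕ) (x : ℝ) : ℝ :=
  (pder j R).eval x

/-- The connection condition at the knot `1`: the vector of derivatives of `Q` of
orders `0,…,3` at `1` equals `M` times that of `P`. -/
def Conn4 (M : Matrix (Fin 4) (Fin 4) ℝ) (P Q : Polynomial ℝ) : Prop :=
  ∀ i : Fin 4, pev Q (i : ℕ) 1 = ∑ j : Fin 4, M i j * pev P (j : ℕ) 1

/-- Multiplicity (capped at `3`) of `x` as a zero of the piecewise function with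
sections `p` on `[0,1]` and `q` on `[1,2]` (right side at `0` and at the knot `1`,
left side at `2`). -/
noncomputable def pmult (p q : Polynomial ℝ) (x : ℝ) : ℕ :=
  sSup {m | m ≤ 3 ∧ ∀ j < m, pev (if x < 1 then p else q) j x = 0}

/-- `E` (the space of pairs `(P,Q)` of cubics satisfying the connection condition `M`
at the knot `1`) is an ECP-space good for design on `([0,2];(1))`: every nonzero element
`(P',Q')` of the derived space `DE` has at most `2` zeros in `[0,2]`, counted with
multiplicities up to `3`. -/
def GoodForDesign (M : Matrix (Fin 4) (Fin 4) ℝ) : Prop :=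
  ∀ P Q : Polynomial ℝ, P.natDegree ≤ 3 → Q.natDegree ≤ 3 → Conn4 M P Q →
    ¬(Polynomial.derivative P = 0 ∧ Polynomial.derivative Q = 0) →
    ∀ S : Finset ℝ, (↑S : Set ℝ) ⊆ Set.Icc (0 : ℝ) 2 →
      ∑ x ∈ S, pmult (Polynomial.derivative P) (Polynomial.derivative Q) x ≤ 2


namespace Stmt18aux
open Polynomial


lemma pder_derivative (j : ℕ) (P : Polynomial ℝ) :
    pder j (Polynomial.derivative P) = pder (j+1) P := by
  induction j with
  | zero => rfl
  | succ n ih =>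
      show Polynomial.derivative (pder n (Polynomial.derivative P)) = _
      rw [ih]; rfl

lemma pev_derivative (j : ℕ) (P : Polynomial ℝ) (x : ℝ) :
    pev (Polynomial.derivative P) j x = pev P (j+1) x := by
  unfold pev; rw [pder_derivative]

lemma eval_quad {r : Polynomial ℝ} (h : r.natDegree ≤ 2) (x : ℝ) :
    r.eval x = r.coeff 0 + r.coeff 1 * x + r.coeff 2 * x^2 := by
  rw [Polynomial.eval_eq_sum_range' (lt_of_le_of_lt h (by norm_num : (2:ℕ) < 3))]
  simp [Finset.sum_range_succ]

lemma pev0 (r : Polynomial ℝ) (x : ℝ) : pev r 0 x = r.eval x := rfl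

lemma pev0' {r : Polynomial ℝ} (h : r.natDegree ≤ 2) (x : ℝ) :
    pev r 0 x = r.coeff 0 + r.coeff 1 * x + r.coeff 2 * x^2 := eval_quad h x

lemma deriv_natDegree_le {r : Polynomial ℝ} (h : r.natDegree ≤ 2) :
    (Polynomial.derivative r).natDegree ≤ 1 :=
  le_trans (Polynomial.natDegree_derivative_le r) (by omega)

lemma coeff3 {r : Polynomial ℝ} (h : r.natDegree ≤ 2) : r.coeff 3 = 0 :=
  Polynomial.coeff_eq_zero_of_natDegree_lt (by omega)

lemma pev1 {r : Polynomial ℝ} (h : r.natDegree ≤ 2) (x : ℝ) :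
    pev r 1 x = r.coeff 1 + 2 * r.coeff 2 * x := by
  show (Polynomial.derivative r).eval x = _
  rw [eval_quad (le_trans (deriv_natDegree_le h) one_le_two),
    Polynomial.coeff_derivative, Polynomial.coeff_derivative, Polynomial.coeff_derivative,
    coeff3 h]
  push_cast; ring

lemma pev2 {r : Polynomial ℝ} (h : r.natDegree ≤ 2) (x : ℝ) :
    pev r 2 x = 2 * r.coeff 2 := by
  show (Polynomial.derivative (Polynomial.derivative r)).eval x = _
  have h1 : (Polynomial.derivative r).natDegree ≤ 2 := le_trans (deriv_natDegree_le h) one_le_two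
  rw [eval_quad (le_trans (deriv_natDegree_le h1) one_le_two)]
  simp only [Polynomial.coeff_derivative, coeff3 h, coeff3 h1]
  push_cast; ring

lemma quad_zero {r : Polynomial ℝ} (h : r.natDegree ≤ 2) (h0 : r.coeff 0 = 0)
    (h1 : r.coeff 1 = 0) (h2 : r.coeff 2 = 0) : r = 0 := by
  ext n
  rcases n with _|_|_|n
  · simpa using h0
  · simpa using h1
  · simpa using h2
  · simpa using Polynomial.coeff_eq_zero_of_natDegree_lt
      (lt_of_le_of_lt h (by omega) : r.natDegree < n + 3)




lemma pmult_mem (p q : Polynomial ℝ) (x : ℝ) :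
    pmult p q x ≤ 3 ∧ ∀ j < pmult p q x, pev (if x < 1 then p else q) j x = 0 := by
  have h0 : (0:ℕ) ∈ {m | m ≤ 3 ∧ ∀ j < m, pev (if x < 1 then p else q) j x = 0} :=
    ⟨by norm_num, fun j hj => absurd hj (Nat.not_lt_zero j)⟩
  exact Nat.sSup_mem ⟨0, h0⟩ ⟨3, fun m hm => hm.1⟩

lemma le_pmult {p q : Polynomial ℝ} {x : ℝ} {m : ℕ} (hm : m ≤ 3)
    (h : ∀ j < m, pev (if x < 1 then p else q) j x = 0) : m ≤ pmult p q x :=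
  le_csSup ⟨3, fun k hk => hk.1⟩ ⟨hm, h⟩

lemma exists_pos_of_sum {f : ℝ → ℕ} {T : Finset ℝ} (h : 1 ≤ ∑ x ∈ T, f x) :
    ∃ x ∈ T, 1 ≤ f x := by
  by_contra hc
  push_neg at hc
  have : ∑ x ∈ T, f x = 0 := Finset.sum_eq_zero (fun x hx => by have := hc x hx; omega)
  omega

lemma exists3 {f : ℝ → ℕ} {T : Finset ℝ} (hb : ∀ x ∈ T, f x ≤ 2)
    (h : 3 ≤ ∑ x ∈ T, f x) :
    (∃ x ∈ T, ∃ y ∈ T, x ≠ y ∧ 2 ≤ f x ∧ 1 ≤ f y) ∨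
    (∃ x ∈ T, ∃ y ∈ T, ∃ z ∈ T, x ≠ y ∧ x ≠ z ∧ y ≠ z ∧
      1 ≤ f x ∧ 1 ≤ f y ∧ 1 ≤ f z) := by
  by_cases h2 : ∃ x ∈ T, 2 ≤ f x
  · obtain ⟨x, hx, hfx⟩ := h2
    have hs : f x + ∑ y ∈ T.erase x, f y = ∑ y ∈ T, f y := Finset.add_sum_erase T f hx
    have hfx3 : f x ≤ 2 := hb x hx
    have : 1 ≤ ∑ y ∈ T.erase x, f y := by omega
    obtain ⟨y, hy, hfy⟩ := exists_pos_of_sum this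
    obtain ⟨hyx, hyT⟩ := Finset.mem_erase.mp hy
    exact Or.inl ⟨x, hx, y, hyT, (Ne.symm hyx), hfx, hfy⟩
  · push_neg at h2
    obtain ⟨x, hx, hfx⟩ := exists_pos_of_sum (le_trans (by norm_num) h)
    have hs : f x + ∑ y ∈ T.erase x, f y = ∑ y ∈ T, f y := Finset.add_sum_erase T f hx
    have hx2 : f x ≤ 1 := by have := h2 x hx; omega
    have : 1 ≤ ∑ y ∈ T.erase x, f y := by omega
    obtain ⟨y, hy, hfy⟩ := exists_pos_of_sum (by omega : 1 ≤ ∑ y ∈ T.erase x, f y)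
    obtain ⟨hyx, hyT⟩ := Finset.mem_erase.mp hy
    have hs2 : f y + ∑ z ∈ (T.erase x).erase y, f z = ∑ y ∈ T.erase x, f y :=
      Finset.add_sum_erase _ f hy
    have hy2 : f y ≤ 1 := by have := h2 y hyT; omega
    have h1z : 1 ≤ ∑ z ∈ (T.erase x).erase y, f z := by omega
    obtain ⟨z, hz, hfz⟩ := exists_pos_of_sum h1z
    obtain ⟨hzy, hz'⟩ := Finset.mem_erase.mp hz
    obtain ⟨hzx, hzT⟩ := Finset.mem_erase.mp hz'
    exact Or.inr ⟨x, hx, y, hyT, z, hzT, Ne.symm hyx, Ne.symm hzx, Ne.symm hzy, hfx, hfy, hfz⟩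

/-- The core positivity inequality. -/
lemma core {β ε g g' u : ℝ} (hβ : -4 < β) (hε : -4 < ε)
    (hg0 : 0 ≤ g) (hg1 : g ≤ 1) (hg0' : 0 ≤ g') (hg1' : g' ≤ 1)
    (hu0 : 0 < u) (hu1 : u ≤ 1) :
    0 < g*g' + (g+g'+β*g*g')*u + (1+ε*(g+g')/2+β*ε*g*g'/4)*u^2 := by
  have hid : g*g' + (g+g'+β*g*g')*u + (1+ε*(g+g')/2+β*ε*g*g'/4)*u^2
      = (β+4)*(g*g')*u*((1-u) + (ε+4)*u/4)
        + (ε+4)*(g*(1-g')+g'*(1-g))*u^2/2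
        + (g*(1-u)+u*(1-g))*(g'*(1-u)+u*(1-g')) := by ring
  rw [hid]
  have hb4 : 0 < β + 4 := by linarith
  have he4 : 0 < ε + 4 := by linarith
  have hw : 0 < (1-u) + (ε+4)*u/4 := by nlinarith
  have hT2 : 0 ≤ (ε+4)*(g*(1-g')+g'*(1-g))*u^2/2 := by
    have : 0 ≤ g*(1-g')+g'*(1-g) := by nlinarith
    positivity
  have hT3 : 0 ≤ (g*(1-u)+u*(1-g))*(g'*(1-u)+u*(1-g')) := by
    have h1 : 0 ≤ g*(1-u)+u*(1-g) := by nlinarith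
    have h2 : 0 ≤ g'*(1-u)+u*(1-g') := by nlinarith
    positivity
  rcases eq_or_lt_of_le hg0 with hg|hg
  · rcases eq_or_lt_of_le hg0' with hg'|hg'
    · rw [← hg, ← hg']
      have h1 : ((0:ℝ)*(1-u)+u*(1-0))*(0*(1-u)+u*(1-0)) = u^2 := by ring
      nlinarith
    · have hT2' : 0 < (ε+4)*(g*(1-g')+g'*(1-g))*u^2/2 := by
        rw [← hg]
        have h1 : (0:ℝ)*(1-g')+g'*(1-0) = g' := by ring
        rw [h1]; positivity
      have hT1 : 0 ≤ (β+4)*(g*g')*u*((1-u) + (ε+4)*u/4) := by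
        have h2 : 0 ≤ g * g' := by nlinarith
        positivity
      linarith
  · rcases eq_or_lt_of_le hg0' with hg'|hg'
    · have hT2' : 0 < (ε+4)*(g*(1-g')+g'*(1-g))*u^2/2 := by
        rw [← hg']
        have h1 : g*(1-(0:ℝ))+0*(1-g) = g := by ring
        rw [h1]; positivity
      have hT1 : 0 ≤ (β+4)*(g*g')*u*((1-u) + (ε+4)*u/4) := by
        have h2 : 0 ≤ g * g' := by nlinarith
        positivity
      linarith
    · have hT1 : 0 < (β+4)*(g*g')*u*((1-u) + (ε+4)*u/4) := by positivity
      linarith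

/-- Factorization data for a quadratic with two known roots (possibly equal with
derivative vanishing). -/
lemma quad_factor {r : Polynomial ℝ} (h2 : r.natDegree ≤ 2) (hr : r ≠ 0) {x1 x2 : ℝ}
    (hkey : r.coeff 1 + r.coeff 2 * (x1 + x2) = 0)
    (e1 : r.eval x1 = 0) :
    r.coeff 2 ≠ 0 ∧ r.coeff 1 = -(r.coeff 2) * (x1 + x2) ∧
      r.coeff 0 = r.coeff 2 * (x1 * x2) := by
  rw [eval_quad h2] at e1
  have hc2 : r.coeff 2 ≠ 0 := by
    intro hc2
    apply hr
    have hc1 : r.coeff 1 = 0 := by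
      have := hkey; rw [hc2] at this; linarith
    have hc0 : r.coeff 0 = 0 := by
      rw [hc1, hc2] at e1; nlinarith [e1]
    exact quad_zero h2 hc0 hc1 hc2
  refine ⟨hc2, by linarith, by linear_combination e1 - x1 * hkey⟩

lemma quad_factor_two {r : Polynomial ℝ} (h2 : r.natDegree ≤ 2) (hr : r ≠ 0) {x1 x2 : ℝ}
    (hne : x1 ≠ x2) (e1 : r.eval x1 = 0) (e2 : r.eval x2 = 0) :
    r.coeff 2 ≠ 0 ∧ r.coeff 1 = -(r.coeff 2) * (x1 + x2) ∧
      r.coeff 0 = r.coeff 2 * (x1 * x2) := by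
  have e1' := e1; have e2' := e2
  rw [eval_quad h2] at e1' e2'
  have hd : x1 - x2 ≠ 0 := sub_ne_zero.mpr hne
  have hkey : r.coeff 1 + r.coeff 2 * (x1 + x2) = 0 := by
    have h : (x1 - x2) * (r.coeff 1 + r.coeff 2 * (x1 + x2)) = 0 := by
      linear_combination e1' - e2'
    rcases mul_eq_zero.mp h with h|h
    · exact absurd h hd
    · exact h
  exact quad_factor h2 hr hkey e1

lemma quad_factor_dbl {r : Polynomial ℝ} (h2 : r.natDegree ≤ 2) (hr : r ≠ 0) {x1 : ℝ}
    (e1 : r.eval x1 = 0) (e1' : pev r 1 x1 = 0) :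
    r.coeff 2 ≠ 0 ∧ r.coeff 1 = -(r.coeff 2) * (x1 + x1) ∧
      r.coeff 0 = r.coeff 2 * (x1 * x1) := by
  rw [pev1 h2] at e1'
  exact quad_factor h2 hr (by linarith) e1

lemma quad_eval_form {r : Polynomial ℝ} (h2 : r.natDegree ≤ 2) {x1 x2 : ℝ}
    (h1 : r.coeff 1 = -(r.coeff 2) * (x1 + x2))
    (h0 : r.coeff 0 = r.coeff 2 * (x1 * x2)) (y : ℝ) :
    r.eval y = r.coeff 2 * (y - x1) * (y - x2) := by
  rw [eval_quad h2, h1, h0]; ring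

/-- If `p` (left piece) has both roots `r1, r2 ∈ [0,1)`, then `q` is nonzero on `[1,2]`. -/
lemma qnonzero {β ε a2 r1 r2 b0 b1 b2 : ℝ} (hβ : -4 < β) (hε : -4 < ε) (ha2 : a2 ≠ 0)
    (h10 : 0 ≤ r1) (h11 : r1 < 1) (h20 : 0 ≤ r2) (h21 : r2 < 1)
    (e1 : b0 + b1 + b2 = a2*(1-r1)*(1-r2))
    (e2 : b1 + 2*b2 = β*(a2*(1-r1)*(1-r2)) + a2*((1-r1)+(1-r2)))
    (e3 : 2*b2 = (β*ε/2)*(a2*(1-r1)*(1-r2)) + ε*(a2*((1-r1)+(1-r2))) + 2*a2)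
    {w : ℝ} (hw1 : 1 ≤ w) (hw2 : w ≤ 2) : b0 + b1*w + b2*w^2 ≠ 0 := by
  rcases eq_or_lt_of_le hw1 with hw|hw
  · intro hzero
    rw [← hw] at hzero
    have : a2*(1-r1)*(1-r2) = 0 := by linarith [e1, hzero]
    have h1 : (1:ℝ)-r1 ≠ 0 := by linarith
    have h2 : (1:ℝ)-r2 ≠ 0 := by linarith
    exact (mul_ne_zero (mul_ne_zero ha2 h1) h2) this
  · have key : (b0 + b1*w + b2*w^2) * a2 = a2^2 *
        ((1-r1)*(1-r2) + ((1-r1)+(1-r2)+β*(1-r1)*(1-r2))*(w-1)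
          + (1+ε*((1-r1)+(1-r2))/2+β*ε*(1-r1)*(1-r2)/4)*(w-1)^2) := by
      linear_combination (a2 : ℝ) * e1 + (a2*(w-1)) * e2 + (a2*(w-1)^2/2) * e3
    have hpos : 0 < (1-r1)*(1-r2) + ((1-r1)+(1-r2)+β*(1-r1)*(1-r2))*(w-1)
          + (1+ε*((1-r1)+(1-r2))/2+β*ε*(1-r1)*(1-r2)/4)*(w-1)^2 :=
      core hβ hε (by linarith) (by linarith) (by linarith) (by linarith)
        (by linarith) (by linarith)
    intro hzero
    rw [hzero, zero_mul] at key
    have : 0 < a2^2 := by positivity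
    nlinarith [key, hpos, this]

/-- If `q` (right piece) has both roots `s1, s2 ∈ [1,2]`, then `p` is nonzero on `[0,1)`. -/
lemma pnonzero {β ε b2 s1 s2 a0 a1 a2 : ℝ} (hβ : -4 < β) (hε : -4 < ε) (hb2 : b2 ≠ 0)
    (h10 : 1 ≤ s1) (h11 : s1 ≤ 2) (h20 : 1 ≤ s2) (h21 : s2 ≤ 2)
    (e1 : b2*(1-s1)*(1-s2) = a0 + a1 + a2)
    (e2 : b2*((1-s1)+(1-s2)) = β*(a0+a1+a2) + (a1+2*a2))
    (e3 : 2*b2 = (β*ε/2)*(a0+a1+a2) + ε*(a1+2*a2) + 2*a2)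
    {w : ℝ} (hw0 : 0 ≤ w) (hw1 : w < 1) : a0 + a1*w + a2*w^2 ≠ 0 := by
  have hA : a0 + a1 + a2 = b2*(1-s1)*(1-s2) := e1.symm
  have hB : a1 + 2*a2 = b2*((1-s1)+(1-s2)) - β*(b2*(1-s1)*(1-s2)) := by
    linear_combination β * e1 - e2
  have hC : 2*a2 = 2*b2 - ε*(b2*((1-s1)+(1-s2))) + (β*ε/2)*(b2*(1-s1)*(1-s2)) := by
    linear_combination (-1 : ℝ) * e3 - ε * hB - (β*ε/2) * hA
  have key : (a0 + a1*w + a2*w^2) * b2 = b2^2 *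
      ((s1-1)*(s2-1) + ((s1-1)+(s2-1)+β*(s1-1)*(s2-1))*(1-w)
        + (1+ε*((s1-1)+(s2-1))/2+β*ε*(s1-1)*(s2-1)/4)*(1-w)^2) := by
    linear_combination (b2 : ℝ) * hA + (b2*(w-1)) * hB + (b2*(w-1)^2/2) * hC
  have hpos : 0 < (s1-1)*(s2-1) + ((s1-1)+(s2-1)+β*(s1-1)*(s2-1))*(1-w)
        + (1+ε*((s1-1)+(s2-1))/2+β*ε*(s1-1)*(s2-1)/4)*(1-w)^2 :=
    core hβ hε (by linarith) (by linarith) (by linarith) (by linarith)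
      (by linarith) (by linarith)
  intro hzero
  rw [hzero, zero_mul] at key
  have h2 : 0 < b2^2 := by positivity
  nlinarith [key, hpos, h2]

lemma pmult_le_two {p q : Polynomial ℝ} (hp2 : p.natDegree ≤ 2) (hq2 : q.natDegree ≤ 2)
    (hp : p ≠ 0) (hq : q ≠ 0) (x : ℝ) : pmult p q x ≤ 2 := by
  obtain ⟨h3, hj⟩ := pmult_mem p q x
  by_contra hc
  set r := if x < 1 then p else q with hrdef
  have hr2 : r.natDegree ≤ 2 := by rw [hrdef]; split_ifs <;> assumption
  have hrne : r ≠ 0 := by rw [hrdef]; split_ifs <;> assumption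
  have e0 := hj 0 (by omega)
  have e1 := hj 1 (by omega)
  have e2 := hj 2 (by omega)
  rw [pev0' hr2] at e0
  rw [pev1 hr2] at e1
  rw [pev2 hr2] at e2
  have hc2 : r.coeff 2 = 0 := by linarith
  have hc1 : r.coeff 1 = 0 := by rw [hc2] at e1; linarith
  have hc0 : r.coeff 0 = 0 := by rw [hc2, hc1] at e0; linarith
  exact hrne (quad_zero hr2 hc0 hc1 hc2)

lemma hard {β ε : ℝ} (hβ : -4 < β) (hε : -4 < ε) :
    GoodForDesign !![1, 0, 0, 0; 0, 1, 0, 0; 0, β, 1, 0; 0, β * ε / 2, ε, 1] := by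
  intro P Q hP hQ hconn hne S hS
  set p := Polynomial.derivative P with hpdef
  set q := Polynomial.derivative Q with hqdef
  have hp2 : p.natDegree ≤ 2 := by
    have h := Polynomial.natDegree_derivative_le P
    rw [← hpdef] at h
    omega
  have hq2 : q.natDegree ≤ 2 := by
    have h := Polynomial.natDegree_derivative_le Q
    rw [← hqdef] at h
    omega
  -- scalar connection equations
  have h1 : pev Q 1 1 = pev P 1 1 := by
    have h := hconn 1
    simpa [Fin.sum_univ_four, Matrix.cons_val_one, Matrix.head_cons, Matrix.cons_val_zero]
      using h
  have h2 : pev Q 2 1 = β * pev P 1 1 + pev P 2 1 := by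
    have h := hconn 2
    simp [Fin.sum_univ_four, Matrix.cons_val_one, Matrix.head_cons, Matrix.cons_val_zero] at h
    linear_combination h
  have h3 : pev Q 3 1 = β * ε / 2 * pev P 1 1 + ε * pev P 2 1 + pev P 3 1 := by
    have h := hconn 3
    simp [Fin.sum_univ_four, Matrix.cons_val_one, Matrix.head_cons, Matrix.cons_val_zero] at h
    have hv : ((3 : Fin 4) : ℕ) = 3 := rfl
    linear_combination h
  have E1 : q.coeff 0 + q.coeff 1 + q.coeff 2 = p.coeff 0 + p.coeff 1 + p.coeff 2 := by
    have h := h1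
    rw [← pev_derivative 0 Q 1, ← pev_derivative 0 P 1, ← hpdef, ← hqdef,
      pev0' hq2, pev0' hp2] at h
    linear_combination h
  have E2 : q.coeff 1 + 2*q.coeff 2 =
      β*(p.coeff 0 + p.coeff 1 + p.coeff 2) + (p.coeff 1 + 2*p.coeff 2) := by
    have h := h2
    rw [← pev_derivative 1 Q 1, ← pev_derivative 0 P 1, ← pev_derivative 1 P 1,
      ← hpdef, ← hqdef, pev1 hq2, pev0' hp2, pev1 hp2] at h
    linear_combination h
  have E3 : 2*q.coeff 2 = (β*ε/2)*(p.coeff 0 + p.coeff 1 + p.coeff 2)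
      + ε*(p.coeff 1 + 2*p.coeff 2) + 2*p.coeff 2 := by
    have h := h3
    rw [← pev_derivative 2 Q 1, ← pev_derivative 0 P 1, ← pev_derivative 1 P 1,
      ← pev_derivative 2 P 1, ← hpdef, ← hqdef, pev2 hq2, pev0' hp2, pev1 hp2, pev2 hp2] at h
    linear_combination h
  -- both pieces are nonzero
  have hp0 : p ≠ 0 := by
    intro h0
    apply hne
    refine ⟨h0, ?_⟩
    have ha0 : p.coeff 0 = 0 := by rw [h0]; simp
    have ha1 : p.coeff 1 = 0 := by rw [h0]; simp
    have ha2 : p.coeff 2 = 0 := by rw [h0]; simp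
    rw [ha0, ha1, ha2] at E1 E2 E3
    have hb2 : q.coeff 2 = 0 := by linarith [E3]
    have hb1 : q.coeff 1 = 0 := by linarith [E2]
    have hb0 : q.coeff 0 = 0 := by linarith [E1]
    exact quad_zero hq2 hb0 hb1 hb2
  have hq0 : q ≠ 0 := by
    intro h0
    apply hne
    have hb0 : q.coeff 0 = 0 := by rw [h0]; simp
    have hb1 : q.coeff 1 = 0 := by rw [h0]; simp
    have hb2 : q.coeff 2 = 0 := by rw [h0]; simp
    have hA : p.coeff 0 + p.coeff 1 + p.coeff 2 = 0 := by
      linear_combination (-1 : ℝ) * E1 + hb0 + hb1 + hb2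
    have hB : p.coeff 1 + 2*p.coeff 2 = 0 := by
      linear_combination (-1 : ℝ) * E2 + hb1 + 2*hb2 - β*hA
    have ha2 : p.coeff 2 = 0 := by
      linear_combination ((-1 : ℝ) * E3 + 2*hb2 - (β*ε/2)*hA - ε*hB) / 2
    have ha1 : p.coeff 1 = 0 := by linarith
    have ha0 : p.coeff 0 = 0 := by linarith
    exact ⟨quad_zero hp2 ha0 ha1 ha2, h0⟩
  -- the two "builder" facts
  have buildP : ∀ r1 r2 : ℝ, 0 ≤ r1 → r1 < 1 → 0 ≤ r2 → r2 < 1 →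
      p.coeff 2 ≠ 0 → p.coeff 1 = -(p.coeff 2)*(r1+r2) → p.coeff 0 = p.coeff 2*(r1*r2) →
      (∀ w, 1 ≤ w → w ≤ 2 → q.eval w ≠ 0) ∧
        (∀ w, w ≠ r1 → w ≠ r2 → p.eval w ≠ 0) := by
    intro r1 r2 h10 h11 h20 h21 hc2 hf1 hf0
    have F1 : q.coeff 0 + q.coeff 1 + q.coeff 2 = p.coeff 2*(1-r1)*(1-r2) := by
      linear_combination E1 + hf0 + hf1
    have F2 : q.coeff 1 + 2*q.coeff 2 = β*(p.coeff 2*(1-r1)*(1-r2))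
        + p.coeff 2*((1-r1)+(1-r2)) := by
      linear_combination E2 + β*hf0 + β*hf1 + hf1
    have F3 : 2*q.coeff 2 = (β*ε/2)*(p.coeff 2*(1-r1)*(1-r2))
        + ε*(p.coeff 2*((1-r1)+(1-r2))) + 2*p.coeff 2 := by
      linear_combination E3 + (β*ε/2)*hf0 + (β*ε/2)*hf1 + ε*hf1
    constructor
    · intro w hw1 hw2
      rw [eval_quad hq2]
      exact qnonzero hβ hε hc2 h10 h11 h20 h21 F1 F2 F3 hw1 hw2
    · intro w hw1 hw2
      rw [quad_eval_form hp2 hf1 hf0]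
      exact mul_ne_zero (mul_ne_zero hc2 (sub_ne_zero.mpr hw1)) (sub_ne_zero.mpr hw2)
  have buildQ : ∀ s1 s2 : ℝ, 1 ≤ s1 → s1 ≤ 2 → 1 ≤ s2 → s2 ≤ 2 →
      q.coeff 2 ≠ 0 → q.coeff 1 = -(q.coeff 2)*(s1+s2) → q.coeff 0 = q.coeff 2*(s1*s2) →
      (∀ w, 0 ≤ w → w < 1 → p.eval w ≠ 0) ∧
        (∀ w, w ≠ s1 → w ≠ s2 → q.eval w ≠ 0) := by
    intro s1 s2 h10 h11 h20 h21 hc2 hg1 hg0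
    have F1 : q.coeff 2*(1-s1)*(1-s2) = p.coeff 0 + p.coeff 1 + p.coeff 2 := by
      linear_combination E1 - hg0 - hg1
    have F2 : q.coeff 2*((1-s1)+(1-s2)) = β*(p.coeff 0 + p.coeff 1 + p.coeff 2)
        + (p.coeff 1 + 2*p.coeff 2) := by
      linear_combination E2 - hg1
    have F3 : 2*q.coeff 2 = (β*ε/2)*(p.coeff 0 + p.coeff 1 + p.coeff 2)
        + ε*(p.coeff 1 + 2*p.coeff 2) + 2*p.coeff 2 := E3
    constructor
    · intro w hw0 hw1
      rw [eval_quad hp2]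
      exact pnonzero hβ hε hc2 h10 h11 h20 h21 F1 F2 F3 hw0 hw1
    · intro w hw1 hw2
      rw [quad_eval_form hq2 hg1 hg0]
      exact mul_ne_zero (mul_ne_zero hc2 (sub_ne_zero.mpr hw1)) (sub_ne_zero.mpr hw2)
  -- now the counting argument
  by_contra hbig
  have h3sum : 3 ≤ ∑ x ∈ S, pmult p q x := by omega
  have hb : ∀ x ∈ S, pmult p q x ≤ 2 := fun x _ => pmult_le_two hp2 hq2 hp0 hq0 x
  have hroot : ∀ x ∈ S, 1 ≤ pmult p q x →
      (x < 1 → p.eval x = 0) ∧ (¬ x < 1 → q.eval x = 0) := by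
    intro x _ hx1
    have h := (pmult_mem p q x).2 0 (by omega)
    constructor
    · intro hlt; rw [if_pos hlt] at h; exact h
    · intro hlt; rw [if_neg hlt] at h; exact h
  rcases exists3 hb h3sum with ⟨x, hxS, y, hyS, hxy, hx2, hy1⟩ |
    ⟨x, hxS, y, hyS, z, hzS, hxy, hxz, hyz, hx1, hy1, hz1⟩
  · -- a double zero at x plus another zero at y
    obtain ⟨hx0, hx2'⟩ := hS (Finset.mem_coe.mpr hxS)
    obtain ⟨hy0, hy2'⟩ := hS (Finset.mem_coe.mpr hyS)
    have hd0 := (pmult_mem p q x).2 0 (by omega)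
    have hd1 := (pmult_mem p q x).2 1 (by omega)
    have hyroot := hroot y hyS hy1
    by_cases hxlt : x < 1
    · rw [if_pos hxlt] at hd0 hd1
      obtain ⟨hc2, hf1, hf0⟩ := quad_factor_dbl hp2 hp0 hd0 hd1
      obtain ⟨hq_ne, hp_ne⟩ := buildP x x hx0 hxlt hx0 hxlt hc2 hf1 hf0
      by_cases hylt : y < 1
      · exact hp_ne y hxy.symm hxy.symm (hyroot.1 hylt)
      · exact hq_ne y (le_of_not_gt hylt) hy2' (hyroot.2 hylt)
    · rw [if_neg hxlt] at hd0 hd1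
      obtain ⟨hc2, hg1, hg0⟩ := quad_factor_dbl hq2 hq0 hd0 hd1
      obtain ⟨hp_ne, hq_ne⟩ := buildQ x x (le_of_not_gt hxlt) hx2' (le_of_not_gt hxlt) hx2'
        hc2 hg1 hg0
      by_cases hylt : y < 1
      · exact hp_ne y hy0 hylt (hyroot.1 hylt)
      · exact hq_ne y hxy.symm hxy.symm (hyroot.2 hylt)
  · -- three distinct zeros
    obtain ⟨hx0, hx2'⟩ := hS (Finset.mem_coe.mpr hxS)
    obtain ⟨hy0, hy2'⟩ := hS (Finset.mem_coe.mpr hyS)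
    obtain ⟨hz0, hz2'⟩ := hS (Finset.mem_coe.mpr hzS)
    have hxr := hroot x hxS hx1
    have hyr := hroot y hyS hy1
    have hzr := hroot z hzS hz1
    -- helper: two distinct roots of p in [0,1) plus another root anywhere: contradiction
    have killP : ∀ u v w : ℝ, u ≠ v → 0 ≤ u → u < 1 → 0 ≤ v → v < 1 → w ≠ u → w ≠ v →
        w ≤ 2 → p.eval u = 0 → p.eval v = 0 →
        ((w < 1 → p.eval w = 0) ∧ (¬ w < 1 → q.eval w = 0)) → False := by
      intro u v w huv hu0 hu1 hv0 hv1 hwu hwv hw2 hpu hpv hwr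
      obtain ⟨hc2, hf1, hf0⟩ := quad_factor_two hp2 hp0 huv hpu hpv
      obtain ⟨hq_ne, hp_ne⟩ := buildP u v hu0 hu1 hv0 hv1 hc2 hf1 hf0
      by_cases hwlt : w < 1
      · exact hp_ne w hwu hwv (hwr.1 hwlt)
      · exact hq_ne w (le_of_not_gt hwlt) hw2 (hwr.2 hwlt)
    have killQ : ∀ u v w : ℝ, u ≠ v → 1 ≤ u → u ≤ 2 → 1 ≤ v → v ≤ 2 → w ≠ u → w ≠ v →
        0 ≤ w → q.eval u = 0 → q.eval v = 0 →
        ((w < 1 → p.eval w = 0) ∧ (¬ w < 1 → q.eval w = 0)) → False := by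
      intro u v w huv hu0 hu1 hv0 hv1 hwu hwv hw0 hqu hqv hwr
      obtain ⟨hc2, hg1, hg0⟩ := quad_factor_two hq2 hq0 huv hqu hqv
      obtain ⟨hp_ne, hq_ne⟩ := buildQ u v hu0 hu1 hv0 hv1 hc2 hg1 hg0
      by_cases hwlt : w < 1
      · exact hp_ne w hw0 hwlt (hwr.1 hwlt)
      · exact hq_ne w hwu hwv (hwr.2 hwlt)
    by_cases hxlt : x < 1 <;> by_cases hylt : y < 1 <;> by_cases hzlt : z < 1
    · exact killP x y z hxy hx0 hxlt hy0 hylt hxz.symm hyz.symm hz2'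
        (hxr.1 hxlt) (hyr.1 hylt) hzr
    · exact killP x y z hxy hx0 hxlt hy0 hylt hxz.symm hyz.symm hz2'
        (hxr.1 hxlt) (hyr.1 hylt) hzr
    · exact killP x z y hxz hx0 hxlt hz0 hzlt hxy.symm hyz hy2'
        (hxr.1 hxlt) (hzr.1 hzlt) hyr
    · exact killQ y z x hyz (le_of_not_gt hylt) hy2' (le_of_not_gt hzlt) hz2' hxy hxz hx0
        (hyr.2 hylt) (hzr.2 hzlt) hxr
    · exact killP y z x hyz hy0 hylt hz0 hzlt hxy hxz hx2'
        (hyr.1 hylt) (hzr.1 hzlt) hxr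
    · exact killQ x z y hxz (le_of_not_gt hxlt) hx2' (le_of_not_gt hzlt) hz2' hxy.symm hyz hy0
        (hxr.2 hxlt) (hzr.2 hzlt) hyr
    · exact killQ x y z hxy (le_of_not_gt hxlt) hx2' (le_of_not_gt hylt) hy2' hxz.symm hyz.symm hz0
        (hxr.2 hxlt) (hyr.2 hylt) hzr
    · exact killQ x y z hxy (le_of_not_gt hxlt) hx2' (le_of_not_gt hylt) hy2' hxz.symm hyz.symm hz0
        (hxr.2 hxlt) (hyr.2 hylt) hzr

noncomputable def cubOf (a b c : ℝ) : Polynomial ℝ :=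
  Polynomial.C (-(a + b/2 + c/3)) + Polynomial.C a * Polynomial.X +
    Polynomial.C (b/2) * Polynomial.X^2 + Polynomial.C (c/3) * Polynomial.X^3

lemma cubOf_natDegree (a b c : ℝ) : (cubOf a b c).natDegree ≤ 3 := by
  unfold cubOf; compute_degree

lemma pev_cub1 (a b c x : ℝ) : pev (cubOf a b c) 1 x = a + b*x + c*x^2 := by
  simp [pev, pder, cubOf]; try ring

lemma pev_cub2 (a b c x : ℝ) : pev (cubOf a b c) 2 x = b + 2*c*x := by
  simp [pev, pder, cubOf]; try ring

lemma pev_cub3 (a b c x : ℝ) : pev (cubOf a b c) 3 x = 2*c := by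
  simp [pev, pder, cubOf]; try ring

lemma pev_cub0 (a b c x : ℝ) :
    pev (cubOf a b c) 0 x = -(a + b/2 + c/3) + a*x + b/2*x^2 + c/3*x^3 := by
  simp [pev, pder, cubOf]; try ring

lemma conn_build {β ε a b c a' b' c' : ℝ}
    (h1 : a' + b' + c' = a + b + c)
    (h2 : b' + 2*c' = β*(a+b+c) + (b+2*c))
    (h3 : 2*c' = (β*ε/2)*(a+b+c) + ε*(b+2*c) + 2*c) :
    Conn4 !![1, 0, 0, 0; 0, 1, 0, 0; 0, β, 1, 0; 0, β * ε / 2, ε, 1]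
      (cubOf a b c) (cubOf a' b' c') := by
  intro i
  fin_cases i <;>
    simp [Fin.sum_univ_four, Matrix.cons_val_one, Matrix.head_cons, Matrix.cons_val_zero,
      show ((0:Fin 4):ℕ) = 0 from rfl, show ((1:Fin 4):ℕ) = 1 from rfl,
      show ((2:Fin 4):ℕ) = 2 from rfl, show ((3:Fin 4):ℕ) = 3 from rfl,
      pev_cub0, pev_cub1, pev_cub2, pev_cub3] <;>
    linarith

lemma deriv_cub_ne {a b c : ℝ} (h : a + b + c ≠ 0) :
    Polynomial.derivative (cubOf a b c) ≠ 0 := by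
  intro h0
  have hv : pev (cubOf a b c) 1 1 = 0 := by
    show (pder 1 (cubOf a b c)).eval 1 = 0
    show (Polynomial.derivative (pder 0 (cubOf a b c))).eval 1 = 0
    show (Polynomial.derivative (cubOf a b c)).eval 1 = 0
    rw [h0]; simp
  rw [pev_cub1] at hv
  apply h; linarith [hv]

lemma sum_ge_contra {p q : Polynomial ℝ} {x1 x2 : ℝ} (hne : x1 ≠ x2)
    (m1 : 1 ≤ pmult p q x1) (m2 : 2 ≤ pmult p q x2)
    (hle : ∑ x ∈ ({x1, x2} : Finset ℝ), pmult p q x ≤ 2) : False := by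
  rw [Finset.sum_pair hne] at hle
  omega

lemma ce1 {β ε : ℝ} (hβ : β ≤ -4) :
    ¬ GoodForDesign !![1, 0, 0, 0; 0, 1, 0, 0; 0, β, 1, 0; 0, β * ε / 2, ε, 1] := by
  intro hG
  have hβ0 : β ≠ 0 := by intro h0; rw [h0] at hβ; linarith
  set t : ℝ := -4/β with htdef
  have htβ : t*β = -4 := by rw [htdef]; field_simp
  have ht0 : 0 < t := by nlinarith [htβ]
  have ht1 : t ≤ 1 := by nlinarith [htβ]
  have hconn := conn_build
    (show ((1+t)^2) + (-2*(1+t)) + 1 = ((1-t)^2) + (-2*(1-t)) + 1 by ring)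
    (show (-2*(1+t)) + 2*1 = β*(((1-t)^2) + (-2*(1-t)) + 1) + ((-2*(1-t)) + 2*1) by
      linear_combination (-t) * htβ)
    (show 2*1 = (β*ε/2)*(((1-t)^2) + (-2*(1-t)) + 1) + ε*((-2*(1-t)) + 2*1) + 2*1 by
      linear_combination (-(ε*t/2)) * htβ)
  have hne : ¬(Polynomial.derivative (cubOf ((1-t)^2) (-2*(1-t)) 1) = 0 ∧
      Polynomial.derivative (cubOf ((1+t)^2) (-2*(1+t)) 1) = 0) := by
    rintro ⟨h0, -⟩
    exact deriv_cub_ne (by nlinarith : ((1-t)^2) + (-2*(1-t)) + 1 ≠ 0) h0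
  have hSsub : (↑({1-t, 1+t} : Finset ℝ) : Set ℝ) ⊆ Set.Icc (0:ℝ) 2 := by
    intro w hw
    simp only [Finset.coe_insert, Finset.coe_singleton, Set.mem_insert_iff,
      Set.mem_singleton_iff] at hw
    rcases hw with h|h <;> rw [h] <;> constructor <;> linarith
  have hle := hG _ _ (cubOf_natDegree _ _ _) (cubOf_natDegree _ _ _) hconn hne _ hSsub
  have m1 : 2 ≤ pmult (Polynomial.derivative (cubOf ((1-t)^2) (-2*(1-t)) 1))
      (Polynomial.derivative (cubOf ((1+t)^2) (-2*(1+t)) 1)) (1-t) := by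
    apply le_pmult (by norm_num)
    intro j hj
    rw [if_pos (by linarith : (1-t) < 1)]
    interval_cases j
    · rw [pev_derivative, pev_cub1]; ring
    · rw [pev_derivative, pev_cub2]; ring
  have m2 : 2 ≤ pmult (Polynomial.derivative (cubOf ((1-t)^2) (-2*(1-t)) 1))
      (Polynomial.derivative (cubOf ((1+t)^2) (-2*(1+t)) 1)) (1+t) := by
    apply le_pmult (by norm_num)
    intro j hj
    rw [if_neg (by linarith : ¬ (1+t) < 1)]
    interval_cases j
    · rw [pev_derivative, pev_cub1]; ring
    · rw [pev_derivative, pev_cub2]; ring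
  exact sum_ge_contra (by intro h0; nlinarith [h0] : (1-t) ≠ (1+t)) (by omega) m2 hle

lemma ce2 {β ε : ℝ} (hβ : -4 < β) (hε : ε ≤ -4) :
    ¬ GoodForDesign !![1, 0, 0, 0; 0, 1, 0, 0; 0, β, 1, 0; 0, β * ε / 2, ε, 1] := by
  intro hG
  have hε0 : ε ≠ 0 := by intro h0; rw [h0] at hε; linarith
  set t : ℝ := -4/ε with htdef
  have htε : t*ε = -4 := by rw [htdef]; field_simp
  have ht0 : 0 < t := by nlinarith [htε]
  have ht1 : t ≤ 1 := by nlinarith [htε]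
  set a : ℝ := t^2+β*t^2+2*t-β*t-3 with hadef
  set b : ℝ := -2*t-β*t^2+2*β*t+6 with hbdef
  set c : ℝ := -(β*t+3) with hcdef
  have hconn := conn_build
    (show ((1+t)^2) + (-2*(1+t)) + 1 = a + b + c by rw [hadef, hbdef, hcdef]; ring)
    (show (-2*(1+t)) + 2*1 = β*(a+b+c) + (b+2*c) by rw [hadef, hbdef, hcdef]; ring)
    (show 2*1 = (β*ε/2)*(a+b+c) + ε*(b+2*c) + 2*c by
      rw [hadef, hbdef, hcdef]; linear_combination (β*t/2 + 2) * htε)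
  have hABC : a + b + c = t^2 := by rw [hadef, hbdef, hcdef]; ring
  have ht2 : (0:ℝ) < t^2 := by positivity
  have hne : ¬(Polynomial.derivative (cubOf a b c) = 0 ∧
      Polynomial.derivative (cubOf ((1+t)^2) (-2*(1+t)) 1) = 0) := by
    rintro ⟨h0, -⟩
    exact deriv_cub_ne (by rw [hABC]; positivity) h0
  -- find the root of p in [0,1)
  have hfact : 0 < (1+β)*t+3 := by nlinarith [mul_pos (show (0:ℝ) < β+4 by linarith) ht0]
  have ha_le : a ≤ 0 := by
    have h : a = ((1+β)*t+3)*(t-1) := by rw [hadef]; ring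
    rw [h]
    exact mul_nonpos_of_nonneg_of_nonpos hfact.le (by linarith)
  have hcont : ContinuousOn (fun x : ℝ => a + b*x + c*x^2) (Set.Icc 0 1) := by fun_prop
  have hivt := intermediate_value_Icc (by norm_num : (0:ℝ) ≤ 1) hcont
  have hmem : (0:ℝ) ∈ Set.Icc (a + b*0 + c*0^2) (a + b*1 + c*1^2) := by
    constructor
    · simpa using ha_le
    · have : a + b*1 + c*1^2 = t^2 := by rw [← hABC]; ring
      rw [this]; positivity
  obtain ⟨r, hrIcc, hfr0⟩ := hivt hmem
  have hfr : a + b*r + c*r^2 = 0 := by simpa using hfr0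
  have hr1 : r < 1 := by
    rcases lt_or_eq_of_le hrIcc.2 with h|h
    · exact h
    · exfalso
      rw [h] at hfr
      have h2 : a + b*1 + c*1^2 = t^2 := by rw [← hABC]; ring
      rw [h2] at hfr
      exact (ne_of_gt ht2) hfr
  have hSsub : (↑({r, 1+t} : Finset ℝ) : Set ℝ) ⊆ Set.Icc (0:ℝ) 2 := by
    intro w hw
    simp only [Finset.coe_insert, Finset.coe_singleton, Set.mem_insert_iff,
      Set.mem_singleton_iff] at hw
    rcases hw with h|h <;> rw [h]
    · exact ⟨hrIcc.1, by linarith [hrIcc.2]⟩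
    · constructor <;> linarith
  have hle := hG _ _ (cubOf_natDegree _ _ _) (cubOf_natDegree _ _ _) hconn hne _ hSsub
  have m1 : 1 ≤ pmult (Polynomial.derivative (cubOf a b c))
      (Polynomial.derivative (cubOf ((1+t)^2) (-2*(1+t)) 1)) r := by
    apply le_pmult (by norm_num)
    intro j hj
    rw [if_pos hr1]
    interval_cases j
    rw [pev_derivative, pev_cub1]
    exact hfr
  have m2 : 2 ≤ pmult (Polynomial.derivative (cubOf a b c))
      (Polynomial.derivative (cubOf ((1+t)^2) (-2*(1+t)) 1)) (1+t) := by
    apply le_pmult (by norm_num)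
    intro j hj
    rw [if_neg (by linarith : ¬ (1+t) < 1)]
    interval_cases j
    · rw [pev_derivative, pev_cub1]; ring
    · rw [pev_derivative, pev_cub2]; ring
  exact sum_ge_contra (by intro h0; nlinarith [h0] : r ≠ (1+t)) m1 m2 hle

end Stmt18aux

/-- Theorem: the piecewise cubic PW-space on `([0,2];(1))` with connection matrix
`M = [[1,0,0,0],[0,1,0,0],[0,β,1,0],[0,βε/2,ε,1]]` is an ECP-space good for design
iff `β > −4` and `ε > −4`. -/
theorem stmt18 (β ε : ℝ) :
    GoodForDesign !![1, 0, 0, 0; 0, 1, 0, 0; 0, β, 1, 0; 0, β * ε / 2, ε, 1] ↔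
      (-4 < β ∧ -4 < ε) := by
  constructor
  · intro hG
    have hb : -4 < β := by
      by_contra hb
      push_neg at hb
      exact Stmt18aux.ce1 hb hG
    refine ⟨hb, ?_⟩
    by_contra he
    push_neg at he
    exact Stmt18aux.ce2 hb he hG
  · rintro ⟨hb, he⟩
    exact Stmt18aux.hard hb he
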